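/- Let (X,u) and (Y,v) be closure spaces. The class 𝒞* of all pairs ((f_λ)_{λ∈Λ}, f) such that (f_λ) is a net in Y^X converging continuously to f ∈ Y^X satisfies the axioms: (CONSTANTS) every constant net with value f converges continuously to f; (SUBNETS) if (f_λ) converges continuously to f, then so does every subnet of (f_λ); (DIVERGENCE) if (f_λ) does not converge continuously to f, then there is a subnet (g_μ) of (f_λ) such that no subnet of (g_μ) converges continuously to f. -/
import Mathlib


open Set

universe u

/-- A Čech closure operator on a type `X`: it satisfies (C1) `cl ∅ = ∅`,
(C2) `A ⊆ cl A` and (C3) `cl (A ∪ B) = cl A ∪ cl B`.  The pair `(X, u)` is a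
(Čech) closure space. -/
structure CechClosure (X : Type u) : Type u where
  cl : Set X → Set X
  cl_empty : cl ∅ = ∅
  subset_cl : ∀ A : Set X, A ⊆ cl A
  cl_union : ∀ A B : Set X, cl (A ∪ B) = cl A ∪ cl B

namespace CechClosure

variable {X Y Z : Type u}

/-- The interior operator of a closure space: `int_u A = X \ u (X \ A)`. -/
def interior (u : CechClosure X) (A : Set X) : Set X := (u.cl Aᶜ)ᶜ

/-- `U` is a neighbourhood of `x` in `(X, u)` if `x ∈ int_u U`. -/
def Nhd (u : CechClosure X) (x : X) (U : Set X) : Prop := x ∈ u.interior U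

theorem interior_subset (u : CechClosure X) (A : Set X) : u.interior A ⊆ A := by
  intro x hx
  by_contra h
  exact hx (u.subset_cl _ h)

theorem interior_inter (u : CechClosure X) (A B : Set X) :
    u.interior (A ∩ B) = u.interior A ∩ u.interior B := by
  unfold interior
  rw [compl_inter, u.cl_union, compl_union]

theorem nhd_univ (u : CechClosure X) (x : X) : u.Nhd x univ := by
  simp [Nhd, interior, u.cl_empty]

theorem nhd_inter (u : CechClosure X) {x : X} {A B : Set X} (hA : u.Nhd x A)
    (hB : u.Nhd x B) : u.Nhd x (A ∩ B) := by
  have h := u.interior_inter A B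
  unfold Nhd at *
  rw [h]
  exact ⟨hA, hB⟩

/-- A function `f : (X, u) → (Y, v)` between closure spaces is continuous if
`f (u A) ⊆ v (f A)` for every `A ⊆ X`. -/
def Continuous (u : CechClosure X) (v : CechClosure Y) (f : X → Y) : Prop :=
  ∀ A : Set X, f '' u.cl A ⊆ v.cl (f '' A)

/-- The product of two closure spaces: `(z, x)` is in the closure of `S` iff every
"rectangle" `W ×ˢ U` of neighbourhoods `W` of `z` and `U` of `x` meets `S`. -/
def prod (w : CechClosure Z) (u : CechClosure X) : CechClosure (Z × X) where
  cl S := {p | ∀ W U, w.Nhd p.1 W → u.Nhd p.2 U → (W ×ˢ U ∩ S).Nonempty}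
  cl_empty := by
    ext p
    simp only [mem_setOf_eq, mem_empty_iff_false, iff_false]
    intro h
    rcases h univ univ (w.nhd_univ _) (u.nhd_univ _) with ⟨q, -, hq⟩
    exact hq
  subset_cl := by
    intro S p hp W U hW hU
    exact ⟨p, ⟨⟨w.interior_subset _ hW, u.interior_subset _ hU⟩, hp⟩⟩
  cl_union := by
    intro S T
    ext p
    simp only [mem_setOf_eq, mem_union]
    constructor
    · intro h
      by_contra hc
      push_neg at hc
      obtain ⟨h1, h2⟩ := hc
      simp only [← Set.not_nonempty_iff_eq_empty] at h1 h2
      obtain ⟨W1, U1, hW1, hU1, hne1⟩ := h1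
      obtain ⟨W2, U2, hW2, hU2, hne2⟩ := h2
      rcases h (W1 ∩ W2) (U1 ∩ U2) (w.nhd_inter hW1 hW2) (u.nhd_inter hU1 hU2) with
        ⟨q, ⟨⟨hq1, hq2⟩, hqST⟩⟩
      rcases hqST with hqS | hqT
      · exact hne1 ⟨q, ⟨⟨hq1.1, hq2.1⟩, hqS⟩⟩
      · exact hne2 ⟨q, ⟨⟨hq1.2, hq2.2⟩, hqT⟩⟩
    · rintro (h | h) W U hW hU
      · rcases h W U hW hU with ⟨q, hq1, hq2⟩
        exact ⟨q, hq1, Or.inl hq2⟩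
      · rcases h W U hW hU with ⟨q, hq1, hq2⟩
        exact ⟨q, hq1, Or.inr hq2⟩

/-- `Y^X`: the type of continuous functions between the closure spaces
`(X, u)` and `(Y, v)`. -/
def ContMap (u : CechClosure X) (v : CechClosure Y) : Type u :=
  {f : X → Y // Continuous u v f}

/-- A closure operator `σ` on `Y^X` is proper (splitting) if for every closure space
`(Z, w)`, continuity of `g : (Z, w) × (X, u) → (Y, v)` implies continuity of
`g* : (Z, w) → (Y^X, σ)`, where `g (z, x) = (g* z) x`. -/
def Proper (u : CechClosure X) (v : CechClosure Y) (σ : CechClosure (ContMap u v)) : Prop :=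
  ∀ (Z : Type u) (w : CechClosure Z) (G : Z → ContMap u v),
    Continuous (w.prod u) v (fun p => (G p.1).1 p.2) → Continuous w σ G

/-- A closure operator `σ` on `Y^X` is admissible (jointly continuous) if for every closure
space `(Z, w)`, continuity of `g* : (Z, w) → (Y^X, σ)` implies continuity of
`g : (Z, w) × (X, u) → (Y, v)`, where `g (z, x) = (g* z) x`. -/
def Admissible (u : CechClosure X) (v : CechClosure Y) (σ : CechClosure (ContMap u v)) : Prop :=
  ∀ (Z : Type u) (w : CechClosure Z) (G : Z → ContMap u v),
    Continuous w σ G → Continuous (w.prod u) v (fun p => (G p.1).1 p.2)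

/-- A topological space regarded as a closure space via its (Kuratowski) closure operator. -/
def ofTop {Z : Type u} (t : TopologicalSpace Z) : CechClosure Z :=
  letI := t
  { cl := fun A => _root_.closure A
    cl_empty := closure_empty
    subset_cl := fun _ => subset_closure
    cl_union := fun _ _ => closure_union }

/-- `le` is the order relation of a directed set: a reflexive and transitive relation on a
nonempty type in which every two elements have an upper bound. -/
structure IsDirectedOrder {Λ : Type*} (le : Λ → Λ → Prop) : Prop where
  refl : ∀ a, le a a
  trans : ∀ a b c, le a b → le b c → le a c
  directed : ∀ a b, ∃ c, le a c ∧ le b c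
  nonempty : Nonempty Λ

/-- Convergence of a net `s : Λ → X` (with order `le` on `Λ`) to a point `x` in a closure
space `(X, u)`: every neighbourhood of `x` contains `s l` residually. -/
def NetConv (u : CechClosure X) {Λ : Type*} (le : Λ → Λ → Prop) (s : Λ → X) (x : X) : Prop :=
  ∀ U : Set X, u.Nhd x U → ∃ l₀, ∀ l, le l₀ l → s l ∈ U

/-- The product order on `Λ × M`. -/
def prodLE {Λ M : Type*} (leΛ : Λ → Λ → Prop) (leM : M → M → Prop) :
    Λ × M → Λ × M → Prop :=
  fun p q => leΛ p.1 q.1 ∧ leM p.2 q.2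

/-- A net `F : Λ → Y^X` converges continuously to `f ∈ Y^X` if for every `x ∈ X` and every
net `s : M → X` converging to `x` in `(X, u)`, the net `(l, m) ↦ (F l) (s m)` (indexed by
`Λ × M` with the product order) converges to `f x` in `(Y, v)`. -/
def ContConv (u : CechClosure X) (v : CechClosure Y) {Λ : Type u} (leΛ : Λ → Λ → Prop)
    (F : Λ → ContMap u v) (f : ContMap u v) : Prop :=
  ∀ (M : Type u) (leM : M → M → Prop), IsDirectedOrder leM →
    ∀ (s : M → X) (x : X), NetConv u leM s x →
      NetConv v (prodLE leΛ leM) (fun p : Λ × M => (F p.1).1 (s p.2)) (f.1 x)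

/-- The upper limit of a net `A : Λ → Set X` of subsets of a closure space `(X, u)`: the set
of points `x` such that for every `l₀` and every neighbourhood `U` of `x` there is `l ≥ l₀`
with `A l ∩ U ≠ ∅`. -/
def UpperLim (u : CechClosure X) {Λ : Type*} (le : Λ → Λ → Prop) (A : Λ → Set X) : Set X :=
  {x | ∀ (l₀ : Λ) (U : Set X), u.Nhd x U → ∃ l, le l₀ l ∧ (A l ∩ U).Nonempty}

/-- `g : M → α` is a subnet of `f : Λ → α`: there is `φ : M → Λ` with `g = f ∘ φ` such that
`φ` is residually above any given index of `Λ`. -/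
def IsSubnet {α : Type*} {Λ M : Type*} (leΛ : Λ → Λ → Prop) (leM : M → M → Prop)
    (f : Λ → α) (g : M → α) : Prop :=
  ∃ φ : M → Λ, (∀ m, g m = f (φ m)) ∧ ∀ l₀, ∃ m₀, ∀ m, leM m₀ m → leΛ l₀ (φ m)

end CechClosure
namespace CechClosure

variable {X Y : Type u}

theorem cl_mono (u : CechClosure X) {A B : Set X} (h : A ⊆ B) : u.cl A ⊆ u.cl B := by
  have hAB : A ∪ B = B := union_eq_self_of_subset_left h
  calc u.cl A ⊆ u.cl A ∪ u.cl B := subset_union_left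
    _ = u.cl (A ∪ B) := (u.cl_union A B).symm
    _ = u.cl B := by rw [hAB]

theorem nhd_preimage {u : CechClosure X} {v : CechClosure Y} {f : X → Y}
    (hf : Continuous u v f) {x : X} {V : Set Y} (hV : v.Nhd (f x) V) :
    u.Nhd x (f ⁻¹' V) := by
  simp only [Nhd, interior, mem_compl_iff] at *
  intro hx
  apply hV
  have h1 : f x ∈ f '' u.cl (f ⁻¹' Vᶜ) := ⟨x, by simpa [preimage_compl] using hx, rfl⟩
  exact v.cl_mono (image_preimage_subset f Vᶜ) (hf _ h1)

theorem prodLE_directed {Λ M : Type*} {leΛ : Λ → Λ → Prop} {leM : M → M → Prop}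
    (hΛ : IsDirectedOrder leΛ) (hM : IsDirectedOrder leM) :
    IsDirectedOrder (prodLE leΛ leM) where
  refl p := ⟨hΛ.refl _, hM.refl _⟩
  trans a b c h1 h2 := ⟨hΛ.trans _ _ _ h1.1 h2.1, hM.trans _ _ _ h1.2 h2.2⟩
  directed a b := by
    obtain ⟨l, hl1, hl2⟩ := hΛ.directed a.1 b.1
    obtain ⟨m, hm1, hm2⟩ := hM.directed a.2 b.2
    exact ⟨(l, m), ⟨hl1, hm1⟩, ⟨hl2, hm2⟩⟩
  nonempty := ⟨(hΛ.nonempty.some, hM.nonempty.some)⟩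

/-- The class `𝒞*` of continuously convergent nets in `Y^X` satisfies (CONSTANTS),
(SUBNETS) and (DIVERGENCE). -/
theorem contConv_constants_subnets_divergence (u : CechClosure X) (v : CechClosure Y) :
    -- (CONSTANTS): every constant net with value `f` converges continuously to `f`.
    (∀ (Λ : Type u) (leΛ : Λ → Λ → Prop), IsDirectedOrder leΛ →
      ∀ f : ContMap u v, ContConv u v leΛ (fun _ : Λ => f) f) ∧
    -- (SUBNETS): if a net converges continuously to `f`, so does each of its subnets.
    (∀ (Λ : Type u) (leΛ : Λ → Λ → Prop), IsDirectedOrder leΛ →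
      ∀ (F : Λ → ContMap u v) (f : ContMap u v), ContConv u v leΛ F f →
        ∀ (M : Type u) (leM : M → M → Prop), IsDirectedOrder leM →
          ∀ G : M → ContMap u v, IsSubnet leΛ leM F G → ContConv u v leM G f) ∧
    -- (DIVERGENCE): if a net does not converge continuously to `f`, it has a subnet no
    -- subnet of which converges continuously to `f`.
    (∀ (Λ : Type u) (leΛ : Λ → Λ → Prop), IsDirectedOrder leΛ →
      ∀ (F : Λ → ContMap u v) (f : ContMap u v), ¬ContConv u v leΛ F f →
        ∃ (M : Type u) (leM : M → M → Prop), IsDirectedOrder leM ∧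
          ∃ G : M → ContMap u v, IsSubnet leΛ leM F G ∧
            ∀ (N : Type u) (leN : N → N → Prop), IsDirectedOrder leN →
              ∀ H : N → ContMap u v, IsSubnet leM leN G H →
                ¬ContConv u v leN H f) := by
  refine ⟨?_, ?_, ?_⟩
  · -- CONSTANTS
    intro Λ leΛ hΛ f M leM hM s x hs V hV
    obtain ⟨m₀, hm₀⟩ := hs (f.1 ⁻¹' V) (nhd_preimage f.2 hV)
    obtain ⟨l₀⟩ := hΛ.nonempty
    exact ⟨(l₀, m₀), fun p hp => hm₀ p.2 hp.2⟩
  · -- SUBNETS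
    intro Λ leΛ hΛ F f hF M leM hM G hG M' leM' hM' s x hs V hV
    obtain ⟨φ, hGF, hφ⟩ := hG
    obtain ⟨⟨l₀, m'₀⟩, h1⟩ := hF M' leM' hM' s x hs V hV
    obtain ⟨m₀, hm₀⟩ := hφ l₀
    refine ⟨(m₀, m'₀), fun p hp => ?_⟩
    show (G p.1).1 (s p.2) ∈ V
    rw [hGF p.1]
    exact h1 (φ p.1, p.2) ⟨hm₀ p.1 hp.1, hp.2⟩
  · -- DIVERGENCE
    intro Λ leΛ hΛ F f hF
    simp only [ContConv, NetConv] at hF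
    push_neg at hF
    obtain ⟨M', leM', hM', s, x, hs, V, hV, hfreq⟩ := hF
    have hdir := prodLE_directed hΛ hM'
    let M := {p : Λ × M' // (F p.1).1 (s p.2) ∉ V}
    let leM : M → M → Prop := fun a b => prodLE leΛ leM' a.1 b.1
    have hMdir : IsDirectedOrder leM :=
      { refl := fun a => hdir.refl a.1
        trans := fun a b c h1 h2 => hdir.trans _ _ _ h1 h2
        directed := fun a b => by
          obtain ⟨r, hr1, hr2⟩ := hdir.directed a.1 b.1
          obtain ⟨p, hp1, hp2⟩ := hfreq r
          exact ⟨⟨p, hp2⟩, hdir.trans _ _ _ hr1 hp1, hdir.trans _ _ _ hr2 hp1⟩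
        nonempty := by
          obtain ⟨p, _, hp2⟩ := hfreq hdir.nonempty.some
          exact ⟨⟨p, hp2⟩⟩ }
    refine ⟨M, leM, hMdir, fun a => F a.1.1, ⟨fun a => a.1.1, fun _ => rfl, ?_⟩, ?_⟩
    · intro l₀
      obtain ⟨m'⟩ := hM'.nonempty
      obtain ⟨p, hp1, hp2⟩ := hfreq (l₀, m')
      exact ⟨⟨p, hp2⟩, fun m hm => hΛ.trans _ _ _ hp1.1 hm.1⟩
    · intro N leN hN H hsub hconv
      obtain ⟨ψ, hHG, hψ⟩ := hsub
      obtain ⟨⟨n₀, m₀⟩, hcv⟩ := hconv M' leM' hM' s x hs V hV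
      obtain ⟨l₁⟩ := hΛ.nonempty
      obtain ⟨p, hp1, hp2⟩ := hfreq (l₁, m₀)
      obtain ⟨n₁, hn₁⟩ := hψ ⟨p, hp2⟩
      obtain ⟨n, hn0, hn1'⟩ := hN.directed n₀ n₁
      have h2 : leM ⟨p, hp2⟩ (ψ n) := hn₁ n hn1'
      have hmem := hcv (n, (ψ n).1.2) ⟨hn0, hM'.trans _ _ _ hp1.2 h2.2⟩
      simp only [hHG] at hmem
      exact (ψ n).2 hmem

end CechClosure
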